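/- Fix integers k ≥ 2, ℓ ≥ 2, reals Γ ≥ 1, d > 0, n > 0, and nonnegative reals Δ_2,…,Δ_ℓ with ∑_{j=2}^{ℓ} Δ_j/d^{j−1} ≤ Γ. Define for x ∈ [0, n/k]: p_V(x) = 1 − kx/n, p_M(x) = kx/(dn), Γ̂(x) = ∑_{j=2}^{ℓ} Δ_j · p_M(x)^{j−1}, d̂(x) = d·p_V(x)^{k−1}·exp(−Γ̂(x)), ĥ(x) = (n/k)·p_V(x)·d̂(x), and ĉ(x) = ∑_{j=1}^{ℓ−1} Δ_{j+1} · j · (p_V(x)^k exp(−Γ̂(x))) · p_M(x)^{j−1}. Then for all x ∈ [0, (1−μ)n/k] with μ ∈ (0,1], (ĉ(x) + d̂(x))/ĥ(x) ≤ 2kΓ/(n·p_V(x)). -/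

import Mathlib

lemma aux_jp (y : ℝ) (hy0 : 0 ≤ y) (hy1 : y ≤ 1) (j : ℕ) :
    (j : ℝ) * (1 - y) * y ^ (j - 1) ≤ 1 := by
  rcases Nat.eq_zero_or_pos j with h | h
  · simp [h]
  have h1 : (j:ℝ) * y^(j-1) ≤ ∑ i ∈ Finset.range j, y ^ i := by
    calc (j:ℝ) * y^(j-1) = ∑ _i ∈ Finset.range j, y^(j-1) := by
          rw [Finset.sum_const, Finset.card_range]; ring
      _ ≤ ∑ i ∈ Finset.range j, y^i := by
          apply Finset.sum_le_sum
          intro i hi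
          simp only [Finset.mem_range] at hi
          exact pow_le_pow_of_le_one hy0 hy1 (by omega)
  have h2 : (1 - y) * ∑ i ∈ Finset.range j, y ^ i = 1 - y ^ j := by
    linear_combination (-1) * geom_sum_mul y j
  have h3 : (1 - y) * ((j:ℝ) * y^(j-1)) ≤ (1 - y) * ∑ i ∈ Finset.range j, y ^ i :=
    mul_le_mul_of_nonneg_left h1 (by linarith)
  nlinarith [pow_nonneg hy0 j]

theorem stmt_3 (k ℓ : ℕ) (hk : 2 ≤ k) (hℓ : 2 ≤ ℓ)
    (Γ d n μ x : ℝ) (hΓ : 1 ≤ Γ) (hd : 0 < d) (hn : 0 < n)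
    (Δ : ℕ → ℝ) (hΔ : ∀ j ∈ Finset.Icc 2 ℓ, 0 ≤ Δ j)
    (hsum : ∑ j ∈ Finset.Icc 2 ℓ, Δ j / d ^ (j-1) ≤ Γ)
    (hμ : 0 < μ) (hμ1 : μ ≤ 1) (hx : 0 ≤ x) (hx' : x ≤ (1 - μ) * n / k) :
    ((∑ j ∈ Finset.Icc 1 (ℓ-1), Δ (j+1) * (j : ℝ) *
        ((1 - k*x/n) ^ k *
          Real.exp (-(∑ j' ∈ Finset.Icc 2 ℓ, Δ j' * (k*x/(d*n)) ^ (j'-1)))) *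
        (k*x/(d*n)) ^ (j-1))
      + d * (1 - k*x/n) ^ (k-1) *
          Real.exp (-(∑ j' ∈ Finset.Icc 2 ℓ, Δ j' * (k*x/(d*n)) ^ (j'-1))))
      / ((n/k) * (1 - k*x/n) * (d * (1 - k*x/n) ^ (k-1) *
          Real.exp (-(∑ j' ∈ Finset.Icc 2 ℓ, Δ j' * (k*x/(d*n)) ^ (j'-1)))))
      ≤ 2 * k * Γ / (n * (1 - k*x/n)) := by
  have hk0 : (0:ℝ) < k := by exact_mod_cast (by omega : 0 < k)
  set E := Real.exp (-(∑ j' ∈ Finset.Icc 2 ℓ, Δ j' * (k*x/(d*n)) ^ (j'-1))) with hE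
  have hEpos : 0 < E := Real.exp_pos _
  have hkx : (k:ℝ)*x/n ≤ 1 - μ := by
    rw [div_le_iff₀ hn]
    calc (k:ℝ)*x ≤ (k:ℝ) * ((1-μ)*n/k) := by
          exact mul_le_mul_of_nonneg_left hx' (le_of_lt hk0)
      _ = (1-μ)*n := by field_simp
  set P := 1 - (k:ℝ)*x/n with hPdef
  have hPpos : 0 < P := by rw [hPdef]; linarith
  have hP1 : P ≤ 1 := by
    rw [hPdef]
    have : 0 ≤ (k:ℝ)*x/n := by positivity
    linarith
  have hPk : P^k = P * P^(k-1) := by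
    rw [← pow_succ']
    congr 1; omega
  have hq : (k:ℝ)*x/(d*n) = (1-P)/d := by
    rw [hPdef, sub_sub_cancel, div_div, mul_comm n d]
  -- bound the sum
  have hSS : (∑ j ∈ Finset.Icc 1 (ℓ-1), Δ (j+1) * (j : ℝ) * (P ^ k * E) * ((k:ℝ)*x/(d*n)) ^ (j-1))
      ≤ Γ * (d * P^(k-1) * E) := by
    have step1 : (∑ j ∈ Finset.Icc 1 (ℓ-1), Δ (j+1) * (j : ℝ) * (P ^ k * E) * ((k:ℝ)*x/(d*n)) ^ (j-1))
        ≤ ∑ j ∈ Finset.Icc 1 (ℓ-1), Δ (j+1) / d^j * (d * P^(k-1) * E) := by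
      apply Finset.sum_le_sum
      intro j hj
      simp only [Finset.mem_Icc] at hj
      have hΔj : 0 ≤ Δ (j+1) := hΔ (j+1) (Finset.mem_Icc.mpr ⟨by omega, by omega⟩)
      have hdj : d^j = d^(j-1)*d := by
        rw [← pow_succ]; congr 1; omega
      have h1 : (j:ℝ) * P * (1-P)^(j-1) ≤ 1 := by
        have := aux_jp (1-P) (by linarith) (by linarith) j
        simpa using this
      have hlhs : Δ (j+1) * (j : ℝ) * (P ^ k * E) * ((k:ℝ)*x/(d*n)) ^ (j-1)
          = ((j:ℝ) * P * (1-P)^(j-1)) * (Δ (j+1) * (P^(k-1) * E) / d^(j-1)) := by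
        rw [hq, hPk, div_pow]
        field_simp
      have hrhs : Δ (j+1) / d^j * (d * P^(k-1) * E)
          = 1 * (Δ (j+1) * (P^(k-1) * E) / d^(j-1)) := by
        rw [hdj]; field_simp
      rw [hlhs, hrhs]
      apply mul_le_mul_of_nonneg_right h1
      positivity
    have step2 : ∑ j ∈ Finset.Icc 1 (ℓ-1), Δ (j+1) / d^j ≤ Γ := by
      have hmap : Finset.Icc 2 ℓ = Finset.map (addRightEmbedding 1) (Finset.Icc 1 (ℓ-1)) := by
        rw [Finset.map_add_right_Icc]
        congr 1
        omega
      rw [hmap, Finset.sum_map] at hsum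
      simpa using hsum
    calc _ ≤ ∑ j ∈ Finset.Icc 1 (ℓ-1), Δ (j+1) / d^j * (d * P^(k-1) * E) := step1
      _ = (∑ j ∈ Finset.Icc 1 (ℓ-1), Δ (j+1) / d^j) * (d * P^(k-1) * E) := by
          rw [Finset.sum_mul]
      _ ≤ Γ * (d * P^(k-1) * E) := by
          apply mul_le_mul_of_nonneg_right step2
          positivity
  have key : (∑ j ∈ Finset.Icc 1 (ℓ-1), Δ (j+1) * (j : ℝ) * (P ^ k * E) * ((k:ℝ)*x/(d*n)) ^ (j-1))
      + d * P^(k-1) * E ≤ 2 * Γ * (d * P^(k-1) * E) := by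
    have hX : 0 < d * P^(k-1) * E := by positivity
    nlinarith [hSS]
  rw [div_le_div_iff₀ (by positivity) (by positivity : (0:ℝ) < n * P)]
  have := mul_le_mul_of_nonneg_right key (by positivity : (0:ℝ) ≤ n * P)
  calc _ ≤ (2 * Γ * (d * P^(k-1) * E)) * (n * P) := this
    _ = 2 * k * Γ * (n / k * P * (d * P ^ (k - 1) * E)) := by
        field_simp
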